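/- Lévy's lemma: Let p < q be coprime positive integers. The set of real numbers ξ ∈ (0, 1/2] such that there exists an index i ≥ 0 with (q_i(ξ), q_{i+1}(ξ)) = (p, q) — where q_i(ξ) denotes the denominator of the i-th continued fraction convergent of ξ — is an interval of length 1/((p+q)·q); moreover such an index i, when it exists, is unique. -/

import Mathlib

/-- The Gauss map `x ↦ {1/x}`. -/
noncomputable def gaussMap (x : ℝ) : ℝ := Int.fract x⁻¹

/-- `partQuotN ξ i = a_{i+1}(ξ)`, the `(i+1)`-st partial quotient of the
continued fraction of `ξ ∈ (0,1)`. -/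
noncomputable def partQuotN (ξ : ℝ) (i : ℕ) : ℕ := (⌊(gaussMap^[i] ξ)⁻¹⌋).toNat

/-- Denominators of the continued fraction convergents of `ξ ∈ (0,1)`:
`q_0 = 1`, `q_1 = a_1`, `q_{i+2} = a_{i+2} q_{i+1} + q_i`. -/
noncomputable def convDen (ξ : ℝ) : ℕ → ℕ
  | 0 => 1
  | 1 => partQuotN ξ 0
  | (i + 2) => partQuotN ξ (i + 1) * convDen ξ (i + 1) + convDen ξ i

/-- continuant matrix of a word: `(A,B,C,D)` is the product of `[[a,1],[1,0]]`. -/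
def cont : List ℕ → ℕ × ℕ × ℕ × ℕ
  | [] => (1, 0, 0, 1)
  | a :: l => (a * (cont l).1 + (cont l).2.2.1, a * (cont l).2.1 + (cont l).2.2.2,
      (cont l).1, (cont l).2.1)

noncomputable def mob : List ℕ → ℝ → ℝ
  | [], t => t
  | a :: l, t => ((a : ℝ) + mob l t)⁻¹

noncomputable def wordCF (ξ : ℝ) (n : ℕ) : List ℕ := List.ofFn (fun k : Fin n => partQuotN ξ k)

noncomputable def convNum (ξ : ℝ) : ℕ → ℕ
  | 0 => 0
  | (n+1) => convDen (gaussMap ξ) n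

lemma pq_succ (ξ : ℝ) (k : ℕ) : partQuotN ξ (k+1) = partQuotN (gaussMap ξ) k := by
  simp [partQuotN, Function.iterate_succ_apply]

lemma convDen_two_step (ξ : ℝ) (n : ℕ) :
    convDen ξ (n+2) = partQuotN ξ (n+1) * convDen ξ (n+1) + convDen ξ n := rfl

lemma convNum_two_step (η : ℝ) (n : ℕ) :
    convNum η (n+2) = partQuotN η (n+1) * convNum η (n+1) + convNum η n := by
  cases n with
  | zero =>
    show convDen (gaussMap η) 1 = partQuotN η 1 * convDen (gaussMap η) 0 + 0
    simp [convDen, pq_succ]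
  | succ m =>
    show convDen (gaussMap η) (m+2) = partQuotN η (m+2) * convDen (gaussMap η) (m+1)
        + convDen (gaussMap η) m
    rw [convDen_two_step, pq_succ η (m+1), pq_succ (gaussMap η) m]

lemma convDen_succ (ξ : ℝ) (n : ℕ) :
    convDen ξ (n+1) = partQuotN ξ 0 * convDen (gaussMap ξ) n + convNum (gaussMap ξ) n := by
  induction n using Nat.twoStepInduction with
  | zero => simp [convDen, convNum]
  | one => simp [convDen, convNum, pq_succ]; ring
  | more n ih2 ih1 =>
    calc convDen ξ (n+3)
        = partQuotN ξ (n+2) * convDen ξ (n+2) + convDen ξ (n+1) := rfl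
      _ = partQuotN ξ (n+2) * (partQuotN ξ 0 * convDen (gaussMap ξ) (n+1)
            + convNum (gaussMap ξ) (n+1))
          + (partQuotN ξ 0 * convDen (gaussMap ξ) n + convNum (gaussMap ξ) n) := by
          rw [← ih1, ← ih2]
      _ = partQuotN ξ 0 * (partQuotN (gaussMap ξ) (n+1) * convDen (gaussMap ξ) (n+1)
            + convDen (gaussMap ξ) n)
          + (partQuotN (gaussMap ξ) (n+1) * convNum (gaussMap ξ) (n+1)
            + convNum (gaussMap ξ) n) := by rw [pq_succ]; ring
      _ = partQuotN ξ 0 * convDen (gaussMap ξ) (n+2) + convNum (gaussMap ξ) (n+2) := by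
          rw [← convDen_two_step, ← convNum_two_step]

lemma wordCF_zero (ξ : ℝ) : wordCF ξ 0 = [] := rfl

lemma wordCF_succ (ξ : ℝ) (n : ℕ) :
    wordCF ξ (n+1) = partQuotN ξ 0 :: wordCF (gaussMap ξ) n := by
  simp [wordCF, List.ofFn_succ, pq_succ]

lemma wordCF_concat (ξ : ℝ) (n : ℕ) :
    wordCF ξ (n+1) = wordCF ξ n ++ [partQuotN ξ n] := by
  rw [wordCF, wordCF, List.ofFn_succ']
  simp

lemma convDen_eq_cont (k : ℕ) : ∀ ξ : ℝ,
    convDen ξ k = (cont (wordCF ξ k)).1 ∧ convNum ξ k = (cont (wordCF ξ k)).2.2.1 := by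
  induction k with
  | zero => intro ξ; simp [convDen, convNum, wordCF_zero, cont]
  | succ k ih =>
    intro ξ
    rw [wordCF_succ]
    constructor
    · rw [convDen_succ, (ih (gaussMap ξ)).1, (ih (gaussMap ξ)).2]
      simp [cont]
    · show convDen (gaussMap ξ) k = _
      rw [(ih (gaussMap ξ)).1]
      simp [cont]

/-! ### continuant lemmas -/

lemma cont_nil : cont [] = (1,0,0,1) := rfl
lemma cont_cons (a : ℕ) (l : List ℕ) :
    cont (a :: l) = (a * (cont l).1 + (cont l).2.2.1, a * (cont l).2.1 + (cont l).2.2.2,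
      (cont l).1, (cont l).2.1) := rfl

lemma contA_pos (l : List ℕ) (h : ∀ x ∈ l, 1 ≤ x) : 1 ≤ (cont l).1 := by
  induction l with
  | nil => simp [cont]
  | cons a l ih =>
    rw [cont_cons]
    have ha : 1 ≤ a := h a (by simp)
    have := ih (fun x hx => h x (by simp [hx]))
    calc 1 ≤ a * (cont l).1 := Nat.one_le_iff_ne_zero.2 (by positivity)
    _ ≤ _ := Nat.le_add_right _ _

lemma contC_pos (a : ℕ) (l : List ℕ) (h : ∀ x ∈ a :: l, 1 ≤ x) :
    1 ≤ (cont (a :: l)).2.2.1 := by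
  rw [cont_cons]
  exact contA_pos l (fun x hx => h x (by simp [hx]))

lemma contC_lt_contA (l : List ℕ) (hne : l ≠ []) (h : ∀ x ∈ l, 1 ≤ x)
    (hlast : ∀ c, l.getLast? = some c → 2 ≤ c) :
    (cont l).2.2.1 < (cont l).1 := by
  induction l with
  | nil => simp at hne
  | cons a l ih =>
    rw [cont_cons]
    cases l with
    | nil =>
      have : 2 ≤ a := hlast a rfl
      simp [cont]; omega
    | cons b m =>
      have h2 : ∀ x ∈ b :: m, 1 ≤ x := fun x hx => h x (by simp at hx ⊢; tauto)
      have hC := contC_pos b m h2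
      have hA := contA_pos (b :: m) h2
      have ha : 1 ≤ a := h a (by simp)
      have : 1 * (cont (b::m)).1 ≤ a * (cont (b::m)).1 := Nat.mul_le_mul_right _ ha
      simp only []
      omega

lemma cont_concat (l : List ℕ) (c : ℕ) :
    cont (l ++ [c]) = (c * (cont l).1 + (cont l).2.1, (cont l).1,
      c * (cont l).2.2.1 + (cont l).2.2.2, (cont l).2.2.1) := by
  induction l with
  | nil => simp [cont]
  | cons a l ih =>
    rw [List.cons_append, cont_cons, ih, cont_cons]
    simp only [Prod.mk.injEq, and_true, true_and]
    ring

lemma cont_reverse (l : List ℕ) :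
    cont l.reverse = ((cont l).1, (cont l).2.2.1, (cont l).2.1, (cont l).2.2.2) := by
  induction l with
  | nil => simp [cont]
  | cons a l ih =>
    rw [List.reverse_cons, cont_concat, ih, cont_cons]

lemma cont_det (l : List ℕ) :
    ((cont l).1 : ℤ) * (cont l).2.2.2 - (cont l).2.1 * (cont l).2.2.1 = (-1)^l.length := by
  induction l with
  | nil => simp [cont]
  | cons a l ih =>
    rw [cont_cons]
    push_cast
    rw [List.length_cons, pow_succ]
    nlinarith [ih]

/-! ### mob lemmas -/

lemma mob_nil (t : ℝ) : mob [] t = t := rfl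
lemma mob_cons (a : ℕ) (l : List ℕ) (t : ℝ) : mob (a :: l) t = ((a : ℝ) + mob l t)⁻¹ := rfl

lemma mob_mem_Icc (l : List ℕ) (h : ∀ x ∈ l, 1 ≤ x) (t : ℝ) (ht : t ∈ Set.Icc (0:ℝ) 1) :
    mob l t ∈ Set.Icc (0:ℝ) 1 := by
  induction l with
  | nil => exact ht
  | cons a l ih =>
    have ha : (1:ℝ) ≤ a := by exact_mod_cast h a (by simp)
    have hm := ih (fun x hx => h x (by simp [hx]))
    rw [mob_cons]
    have h1 : (1:ℝ) ≤ (a:ℝ) + mob l t := by linarith [hm.1]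
    constructor
    · positivity
    · rw [inv_le_one_iff₀]; right; exact h1

lemma mob_mem_Ioo (l : List ℕ) (h : ∀ x ∈ l, 1 ≤ x) (t : ℝ) (ht : t ∈ Set.Ioo (0:ℝ) 1) :
    mob l t ∈ Set.Ioo (0:ℝ) 1 := by
  induction l with
  | nil => exact ht
  | cons a l ih =>
    have ha : (1:ℝ) ≤ a := by exact_mod_cast h a (by simp)
    have hm := ih (fun x hx => h x (by simp [hx]))
    rw [mob_cons]
    have h1 : (1:ℝ) < (a:ℝ) + mob l t := by linarith [hm.1]
    constructor
    · positivity
    · rw [inv_lt_one_iff₀]; right; exact h1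

lemma mob_head_mem (a : ℕ) (l : List ℕ) (ha : 2 ≤ a) (h : ∀ x ∈ l, 1 ≤ x)
    (t : ℝ) (ht : t ∈ Set.Icc (0:ℝ) 1) :
    mob (a :: l) t ∈ Set.Ioc (0:ℝ) (1/2) := by
  have hm := mob_mem_Icc l h t ht
  have ha' : (2:ℝ) ≤ a := by exact_mod_cast ha
  rw [mob_cons]
  have h1 : (2:ℝ) ≤ (a:ℝ) + mob l t := by linarith [hm.1]
  constructor
  · positivity
  · rw [inv_le_comm₀ (by linarith) (by norm_num)]
    linarith

lemma mob_formula (l : List ℕ) (h : ∀ x ∈ l, 1 ≤ x) (t : ℝ) (ht : 0 ≤ t) :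
    mob l t = (((cont l).2.2.1 : ℝ) + (cont l).2.2.2 * t) / (((cont l).1 : ℝ) + (cont l).2.1 * t) := by
  induction l with
  | nil => simp [cont, mob_nil]
  | cons a l ih =>
    have hA : (1:ℝ) ≤ ((cont l).1 : ℝ) := by
      exact_mod_cast contA_pos l (fun x hx => h x (by simp [hx]))
    have hB : (0:ℝ) ≤ ((cont l).2.1 : ℝ) := by positivity
    have hden : (0:ℝ) < ((cont l).1 : ℝ) + (cont l).2.1 * t := by nlinarith
    rw [mob_cons, ih (fun x hx => h x (by simp [hx])), cont_cons]
    push_cast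
    have e : (a:ℝ) + (((cont l).2.2.1 : ℝ) + (cont l).2.2.2 * t) / (((cont l).1 : ℝ) + (cont l).2.1 * t)
        = ((a * (((cont l).1 : ℝ) + (cont l).2.1 * t) + (((cont l).2.2.1 : ℝ) + (cont l).2.2.2 * t)))
          / (((cont l).1 : ℝ) + (cont l).2.1 * t) := by
      field_simp
    rw [e, inv_div]
    congr 1 <;> push_cast <;> ring

lemma inv_shift_image (a : ℝ) (ha : 1 ≤ a) (u v : ℝ) (hu : 0 ≤ u) (hv : 0 ≤ v) :
    (fun x : ℝ => (a + x)⁻¹) '' Set.Ioo u v = Set.Ioo (a+v)⁻¹ (a+u)⁻¹ := by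
  ext y
  simp only [Set.mem_image, Set.mem_Ioo]
  constructor
  · rintro ⟨x, ⟨hx1, hx2⟩, rfl⟩
    have h1 : 0 < a + u := by linarith
    have h2 : 0 < a + x := by linarith
    have h3 : 0 < a + v := by linarith
    exact ⟨by rw [inv_lt_inv₀ h3 h2]; linarith, by rw [inv_lt_inv₀ h2 h1]; linarith⟩
  · rintro ⟨hy1, hy2⟩
    have h1 : 0 < a + u := by linarith
    have h3 : 0 < a + v := by linarith
    have hy0 : 0 < y := lt_trans (by positivity) hy1
    refine ⟨y⁻¹ - a, ⟨?_, ?_⟩, by simp [hy0.ne']⟩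
    · have := (lt_inv_comm₀ hy0 h1).1 hy2
      linarith
    · have := (inv_lt_comm₀ h3 hy0).1 hy1
      linarith

lemma mob_image (l : List ℕ) (h : ∀ x ∈ l, 1 ≤ x) :
    mob l '' Set.Ioo 0 1
      = Set.Ioo (min (mob l 0) (mob l 1)) (max (mob l 0) (mob l 1)) := by
  induction l with
  | nil => simp [mob_nil, Set.image_id', show mob [] = fun t => t from rfl]
  | cons a l ih =>
    have h' : ∀ x ∈ l, 1 ≤ x := fun x hx => h x (by simp [hx])
    have ha : (1:ℝ) ≤ a := by exact_mod_cast h a (by simp)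
    have h0 := mob_mem_Icc l h' 0 (by norm_num)
    have h1 := mob_mem_Icc l h' 1 (by norm_num)
    have himg : mob (a :: l) '' Set.Ioo 0 1
        = (fun x : ℝ => ((a:ℝ) + x)⁻¹) '' (mob l '' Set.Ioo 0 1) := by
      rw [← Set.image_comp]; rfl
    rw [himg, ih h']
    rcases le_total (mob l 0) (mob l 1) with hc | hc
    · rw [min_eq_left hc, max_eq_right hc,
        inv_shift_image (a:ℝ) ha _ _ h0.1 h1.1]
      have : ((a:ℝ) + mob l 1)⁻¹ ≤ ((a:ℝ) + mob l 0)⁻¹ := by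
        apply inv_anti₀ (by linarith [h0.1]) (by linarith)
      rw [mob_cons, mob_cons, min_eq_right this, max_eq_left this]
    · rw [min_eq_right hc, max_eq_left hc,
        inv_shift_image (a:ℝ) ha _ _ h1.1 h0.1]
      have : ((a:ℝ) + mob l 0)⁻¹ ≤ ((a:ℝ) + mob l 1)⁻¹ := by
        apply inv_anti₀ (by linarith [h1.1]) (by linarith)
      rw [mob_cons, mob_cons, min_eq_left this, max_eq_right this]

lemma wordCF_of_mob (l : List ℕ) (h : ∀ x ∈ l, 1 ≤ x) (t : ℝ) (ht : t ∈ Set.Ioo (0:ℝ) 1) :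
    ∀ k ≤ l.length, wordCF (mob l t) k = l.take k := by
  induction l with
  | nil => intro k hk; rw [Nat.le_zero.mp hk]; rfl
  | cons a l ih =>
    intro k hk
    have h' : ∀ x ∈ l, 1 ≤ x := fun x hx => h x (by simp [hx])
    have hm := mob_mem_Ioo l h' t ht
    have key1 : partQuotN (mob (a :: l) t) 0 = a := by
      have : (mob (a :: l) t)⁻¹ = (a:ℝ) + mob l t := by
        rw [mob_cons, inv_inv]
      unfold partQuotN
      rw [Function.iterate_zero_apply, this]
      have : ⌊(a:ℝ) + mob l t⌋ = a := by
        rw [add_comm, Int.floor_add_natCast, Int.floor_eq_zero_iff.2 ⟨hm.1.le, hm.2⟩]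
        simp
      rw [this]; simp
    have key2 : gaussMap (mob (a :: l) t) = mob l t := by
      unfold gaussMap
      rw [mob_cons, inv_inv, add_comm, Int.fract_add_natCast,
        Int.fract_eq_self.2 ⟨hm.1.le, hm.2⟩]
    cases k with
    | zero => rfl
    | succ k =>
      rw [wordCF_succ, key1, key2, List.take_succ_cons,
        ih h' k (by simpa using hk)]

lemma eq_mob_wordCF (n : ℕ) : ∀ ξ : ℝ, (∀ k < n, 0 < gaussMap^[k] ξ) →
    ξ = mob (wordCF ξ n) (gaussMap^[n] ξ) := by
  induction n with
  | zero => intro ξ _; rfl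
  | succ n ih =>
    intro ξ hξ
    have hξ0 : 0 < ξ := hξ 0 (Nat.succ_pos _)
    have hinv : 0 < ξ⁻¹ := by positivity
    have hfl : (0:ℤ) ≤ ⌊ξ⁻¹⌋ := Int.le_floor.2 (by exact_mod_cast hinv.le)
    have hcast : ((partQuotN ξ 0 : ℕ) : ℝ) = (⌊ξ⁻¹⌋ : ℝ) := by
      unfold partQuotN
      rw [Function.iterate_zero_apply]
      exact_mod_cast congrArg (Int.cast : ℤ → ℝ) (Int.toNat_of_nonneg hfl)
    have key : ((partQuotN ξ 0 : ℕ) : ℝ) + gaussMap ξ = ξ⁻¹ := by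
      rw [hcast]; unfold gaussMap; rw [Int.fract]; ring
    rw [wordCF_succ, mob_cons, Function.iterate_succ_apply,
      ← ih (gaussMap ξ) (fun k hk => by
        have := hξ (k+1) (by omega)
        rwa [Function.iterate_succ_apply] at this),
      key, inv_inv]

/-! ### quotient bounds and monotonicity -/

lemma pq_one_le (ξ : ℝ) (k : ℕ) (h : gaussMap^[k] ξ ∈ Set.Ioo (0:ℝ) 1) :
    1 ≤ partQuotN ξ k := by
  unfold partQuotN
  have : (1:ℝ) < (gaussMap^[k] ξ)⁻¹ := (one_lt_inv_iff₀).2 ⟨h.1, h.2⟩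
  have : (1:ℤ) ≤ ⌊(gaussMap^[k] ξ)⁻¹⌋ := Int.le_floor.2 (by exact_mod_cast this.le)
  omega

lemma pq_zero_ge_two (ξ : ℝ) (h : ξ ∈ Set.Ioc (0:ℝ) (1/2)) : 2 ≤ partQuotN ξ 0 := by
  unfold partQuotN
  rw [Function.iterate_zero_apply]
  have h2 : (2:ℝ) ≤ ξ⁻¹ := by
    rw [show (2:ℝ) = (1/2)⁻¹ by norm_num]
    exact inv_anti₀ h.1 h.2
  have : (2:ℤ) ≤ ⌊ξ⁻¹⌋ := Int.le_floor.2 (by exact_mod_cast h2)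
  omega

lemma iterate_mem_Ico (ξ : ℝ) (hξ : ξ ∈ Set.Ico (0:ℝ) 1) (k : ℕ) :
    gaussMap^[k] ξ ∈ Set.Ico (0:ℝ) 1 := by
  induction k with
  | zero => exact hξ
  | succ k ih =>
    rw [Function.iterate_succ_apply']
    exact ⟨Int.fract_nonneg _, Int.fract_lt_one _⟩

lemma convDen_pos (ξ : ℝ) (k : ℕ) (h : ∀ j < k, 1 ≤ partQuotN ξ j) : 1 ≤ convDen ξ k := by
  induction k using Nat.twoStepInduction with
  | zero => exact le_refl _
  | one => exact h 0 (by norm_num)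
  | more k ih _ =>
    rw [convDen_two_step]
    have h1 := ih (fun j hj => h j (by omega))
    have h2 := h (k+1) (by omega)
    nlinarith [convDen_pos ξ (k+1) (fun j hj => h j (by omega))]

lemma convDen_lt_succ (ξ : ℝ) (k : ℕ) (h : ∀ j ≤ k, 1 ≤ partQuotN ξ j)
    (h0 : 2 ≤ partQuotN ξ 0) : convDen ξ k < convDen ξ (k+1) := by
  cases k with
  | zero => exact h0
  | succ k =>
    rw [convDen_two_step]
    have h1 : 1 ≤ convDen ξ k := convDen_pos ξ k (fun j hj => h j (by omega))
    have h2 : 1 ≤ convDen ξ (k+1) := convDen_pos ξ (k+1) (fun j hj => h j (by omega))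
    have h3 := h (k+1) le_rfl
    nlinarith

/-! ### irrational preservation -/

lemma gauss_irrational (ξ : ℝ) (h : Irrational ξ) (hξ : ξ ∈ Set.Ioo (0:ℝ) 1) :
    Irrational (gaussMap ξ) ∧ gaussMap ξ ∈ Set.Ioo (0:ℝ) 1 := by
  have hinv : Irrational ξ⁻¹ := h.inv
  have hfr : Irrational (gaussMap ξ) := by
    unfold gaussMap; rw [Int.fract]
    exact hinv.sub_intCast _
  refine ⟨hfr, ?_, Int.fract_lt_one _⟩
  rcases lt_or_eq_of_le (Int.fract_nonneg ξ⁻¹) with h' | h'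
  · exact h'
  · exfalso
    apply hfr
    rw [gaussMap, ← h']
    exact ⟨0, by norm_num⟩

lemma gauss_iter_irrational (ξ : ℝ) (h : Irrational ξ) (hξ : ξ ∈ Set.Ioo (0:ℝ) 1) (k : ℕ) :
    Irrational (gaussMap^[k] ξ) ∧ gaussMap^[k] ξ ∈ Set.Ioo (0:ℝ) 1 := by
  induction k with
  | zero => exact ⟨h, hξ⟩
  | succ k ih =>
    rw [Function.iterate_succ_apply']
    exact gauss_irrational _ ih.1 ih.2

/-! ### zero tail -/

lemma gauss_zero : gaussMap 0 = 0 := by simp [gaussMap]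

lemma gauss_iter_zero (j : ℕ) : gaussMap^[j] (0:ℝ) = 0 := by
  induction j with
  | zero => rfl
  | succ j ih => rw [Function.iterate_succ_apply', ih, gauss_zero]

lemma pq_zero_of_ge (ξ : ℝ) (m k : ℕ) (hm : gaussMap^[m] ξ = 0) (hk : m ≤ k) :
    partQuotN ξ k = 0 := by
  obtain ⟨j, rfl⟩ := Nat.exists_eq_add_of_le hk
  unfold partQuotN
  rw [add_comm, Function.iterate_add_apply, hm, gauss_iter_zero]
  simp

lemma convDen_stab (ξ : ℝ) (m₀ : ℕ) (h : ∀ k, m₀ + 1 ≤ k → partQuotN ξ k = 0) :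
    ∀ d, convDen ξ (m₀ + 1 + 2*d) = convDen ξ (m₀+1) ∧
      convDen ξ (m₀ + 2 + 2*d) = convDen ξ m₀ := by
  intro d
  induction d with
  | zero =>
    refine ⟨rfl, ?_⟩
    have e : m₀ + 2 + 2*0 = m₀ + 2 := by ring
    rw [e, convDen_two_step, h (m₀+1) le_rfl]
    simp
  | succ d ih =>
    constructor
    · have e : m₀ + 1 + 2*(d+1) = (m₀ + 1 + 2*d) + 2 := by ring
      rw [e, convDen_two_step, h _ (by omega)]
      simpa using ih.1
    · have e : m₀ + 2 + 2*(d+1) = (m₀ + 2 + 2*d) + 2 := by ring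
      rw [e, convDen_two_step, h _ (by omega)]
      simpa using ih.2

/-! ### Euclid: existence and uniqueness of the word -/

def EuCond (u : List ℕ) (p q : ℕ) : Prop :=
  (∀ x ∈ u, 1 ≤ x) ∧ (∀ c, u.getLast? = some c → 2 ≤ c) ∧
    (cont u).1 = q ∧ (cont u).2.2.1 = p

lemma eu_ne_nil {u : List ℕ} {p q : ℕ} (h : EuCond u p q) (hp : 0 < p) : u ≠ [] := by
  intro rfl'
  obtain ⟨-, -, -, hC⟩ := h
  rw [rfl'] at hC
  simp [cont] at hC
  omega

lemma eu_one {u : List ℕ} {q : ℕ} (h : EuCond u 1 q) (hq : 1 < q) : u = [q] := by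
  obtain ⟨hent, hlast, hA, hC⟩ := h
  match u with
  | [] => simp [cont] at hC
  | [c] =>
    simp [cont] at hA
    rw [hA]
  | c :: d :: v =>
    exfalso
    have hC' : (cont (d :: v)).1 = 1 := by
      rw [cont_cons] at hC; exact hC
    have hd : 1 ≤ d := hent d (by simp)
    have hAv : 1 ≤ (cont v).1 := contA_pos v (fun x hx => hent x (by simp [hx]))
    rw [cont_cons] at hC'
    have hCv : (cont v).2.2.1 = 0 := by nlinarith
    have hv : v = [] := by
      match v with
      | [] => rfl
      | e :: w =>
        exfalso
        have := contC_pos e w (fun x hx => hent x (by simp at hx ⊢; tauto))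
        omega
    subst hv
    simp [cont] at hC'
    have : d = 1 := by omega
    subst this
    have := hlast 1 (by simp)
    omega

lemma eu_step {u : List ℕ} {p q : ℕ} (h : EuCond u p q) (hp : 2 ≤ p) (hpq : p < q) :
    ∃ v, u = (q / p) :: v ∧ EuCond v (q % p) p ∧ 0 < q % p ∧ q % p < p := by
  obtain ⟨hent, hlast, hA, hC⟩ := h
  match u with
  | [] => simp [cont] at hC; omega
  | c :: v =>
    simp only [cont_cons] at hA hC
    have hentv : ∀ x ∈ v, 1 ≤ x := fun x hx => hent x (by simp [hx])
    have hvne : v ≠ [] := by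
      intro rfl'
      rw [rfl'] at hC
      simp [cont] at hC
      omega
    have hlastv : ∀ c', v.getLast? = some c' → 2 ≤ c' := by
      intro c' hc'
      apply hlast c'
      match v, hvne with
      | b :: m, _ => rw [List.getLast?_cons_cons]; exact hc'
    have hCv_lt : (cont v).2.2.1 < (cont v).1 := contC_lt_contA v hvne hentv hlastv
    have hCv_pos : 1 ≤ (cont v).2.2.1 := by
      match v, hvne with
      | b :: m, _ => exact contC_pos b m hentv
    rw [hC] at hCv_lt
    have hA' : (cont v).2.2.1 + p * c = q := by
      rw [← hC, mul_comm]
      omega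
    have key := (Nat.div_mod_unique (show 0 < p by omega)).2 ⟨hA', hCv_lt⟩
    refine ⟨v, ?_, ⟨hentv, hlastv, hC, key.2.symm⟩, ?_, ?_⟩
    · rw [key.1]
    · omega
    · exact Nat.mod_lt _ (by omega)

lemma eu_unique : ∀ q p u1 u2, 0 < p → p < q → EuCond u1 p q → EuCond u2 p q → u1 = u2 := by
  intro q
  induction q using Nat.strong_induction_on with
  | _ q ih =>
    intro p u1 u2 hp hpq h1 h2
    rcases Nat.lt_or_ge p 2 with hp2 | hp2
    · have hp1 : p = 1 := by omega
      subst hp1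
      rw [eu_one h1 hpq, eu_one h2 hpq]
    · obtain ⟨v1, rfl, hv1, hr, hrp⟩ := eu_step h1 hp2 hpq
      obtain ⟨v2, rfl, hv2, _, _⟩ := eu_step h2 hp2 hpq
      rw [ih p hpq (q % p) v1 v2 hr hrp hv1 hv2]

lemma eu_exists : ∀ p, 0 < p → ∀ q, p < q → Nat.gcd p q = 1 → ∃ u, EuCond u p q := by
  intro p
  induction p using Nat.strong_induction_on with
  | _ p ih =>
    intro hp q hpq hgcd
    rcases Nat.lt_or_ge p 2 with hp2 | hp2
    · have hp1 : p = 1 := by omega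
      subst hp1
      refine ⟨[q], ?_, ?_, ?_, ?_⟩
      · intro x hx
        simp at hx
        omega
      · intro c hc
        simp at hc
        omega
      · simp [cont]
      · simp [cont]
    · have hndvd : ¬ p ∣ q := by
        intro hdvd
        have h1 : p ∣ Nat.gcd p q := Nat.dvd_gcd dvd_rfl hdvd
        rw [hgcd] at h1
        exact absurd (Nat.le_of_dvd one_pos h1) (by omega)
      have hr : 0 < q % p := Nat.pos_of_ne_zero (fun h => hndvd (Nat.dvd_of_mod_eq_zero h))
      have hrp : q % p < p := Nat.mod_lt _ (by omega)
      have hgcd' : Nat.gcd (q % p) p = 1 := by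
        rw [← Nat.gcd_rec]; exact hgcd
      obtain ⟨v, hv⟩ := ih (q % p) hrp hr p hrp hgcd'
      obtain ⟨hentv, hlastv, hAv, hCv⟩ := hv
      have hvne : v ≠ [] := by
        intro rfl'
        rw [rfl'] at hAv
        simp [cont] at hAv
        omega
      refine ⟨(q / p) :: v, ?_, ?_, ?_, ?_⟩
      · intro x hx
        simp at hx
        rcases hx with rfl | hx
        · exact Nat.one_le_div_iff (by omega) |>.2 (by omega)
        · exact hentv x hx
      · intro c hc
        apply hlastv c
        match v, hvne with
        | b :: m, _ => rw [List.getLast?_cons_cons] at hc; exact hc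
      · rw [cont_cons]
        simp only []
        rw [hAv, hCv]
        exact Nat.div_add_mod' q p
      · rw [cont_cons]; exact hAv


/-- Lévy's lemma: for coprime positive integers `p < q`, the set
of `ξ ∈ (0,1/2]` admitting an index `i` with `(q_i(ξ), q_{i+1}(ξ)) = (p,q)` is
an interval of length `1/((p+q)q)`; moreover such an index is unique. -/
theorem stmt9 (p q : ℕ) (hp : 0 < p) (hpq : p < q) (hco : Nat.Coprime p q) :
    (∃ a b : ℝ,
      b - a = 1 / (((p : ℝ) + q) * q) ∧
      Set.Ioo a b ⊆
        {ξ : ℝ | ξ ∈ Set.Ioc (0 : ℝ) (1 / 2) ∧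
          ∃ i : ℕ, convDen ξ i = p ∧ convDen ξ (i + 1) = q} ∧
      {ξ : ℝ | ξ ∈ Set.Ioc (0 : ℝ) (1 / 2) ∧
          ∃ i : ℕ, convDen ξ i = p ∧ convDen ξ (i + 1) = q} ⊆ Set.Icc a b) ∧
    (∀ ξ : ℝ, ξ ∈ Set.Ioc (0 : ℝ) (1 / 2) → Irrational ξ →
      ∀ i j : ℕ, (convDen ξ i = p ∧ convDen ξ (i + 1) = q) →
        (convDen ξ j = p ∧ convDen ξ (j + 1) = q) → i = j) := by
  constructor
  · -- the interval part
    obtain ⟨u, hu⟩ := eu_exists p hp q hpq hco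
    have hune : u ≠ [] := eu_ne_nil hu hp
    obtain ⟨hent_u, hlast_u, hAu, hCu⟩ := hu
    set w : List ℕ := u.reverse with hw
    have hwne : w ≠ [] := by simpa [hw] using hune
    have hent_w : ∀ x ∈ w, 1 ≤ x := fun x hx =>
      hent_u x (by rwa [hw, List.mem_reverse] at hx)
    have hAw : (cont w).1 = q := by rw [hw, cont_reverse]; exact hAu
    have hBw : (cont w).2.1 = p := by rw [hw, cont_reverse]; exact hCu
    -- head of w
    obtain ⟨h0, wt, hwht⟩ : ∃ h0 wt, w = h0 :: wt := by
      match w, hwne with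
      | a :: l, _ => exact ⟨a, l, rfl⟩
    have hh2 : 2 ≤ h0 := by
      apply hlast_u h0
      rw [← List.head?_reverse, ← hw, hwht]
      rfl
    set m0 : ℝ := mob w 0 with hm0def
    set m1 : ℝ := mob w 1 with hm1def
    have hA1 : (1:ℝ) ≤ ((cont w).1 : ℝ) := by exact_mod_cast contA_pos w hent_w
    have hB0 : (0:ℝ) ≤ ((cont w).2.1 : ℝ) := by positivity
    have hm0 : m0 = ((cont w).2.2.1 : ℝ) / ((cont w).1 : ℝ) := by
      rw [hm0def, mob_formula w hent_w 0 le_rfl]; norm_num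
    have hm1 : m1 = (((cont w).2.2.1 : ℝ) + (cont w).2.2.2)
        / (((cont w).1 : ℝ) + (cont w).2.1) := by
      rw [hm1def, mob_formula w hent_w 1 zero_le_one]; norm_num
    have hdetZ := cont_det w
    have hdet : |((cont w).1 : ℝ) * (cont w).2.2.2 - ((cont w).2.1 : ℝ) * (cont w).2.2.1| = 1 := by
      have h1 : |((cont w).1 * (cont w).2.2.2 - (cont w).2.1 * (cont w).2.2.1 : ℤ)| = 1 := by
        rw [hdetZ, abs_pow, abs_neg, abs_one, one_pow]
      have h2 : ((cont w).1 * (cont w).2.2.2 - (cont w).2.1 * (cont w).2.2.1 : ℤ) = 1 ∨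
          ((cont w).1 * (cont w).2.2.2 - (cont w).2.1 * (cont w).2.2.1 : ℤ) = -1 := by
        rcases abs_eq (by norm_num : (0:ℤ) ≤ 1) |>.1 h1 with h | h
        · left; exact h
        · right; exact h
      rcases h2 with h | h
      · rw [show ((cont w).1 : ℝ) * (cont w).2.2.2 - ((cont w).2.1 : ℝ) * (cont w).2.2.1 = (1:ℝ)
          from by exact_mod_cast congrArg (Int.cast : ℤ → ℝ) h]
        norm_num
      · rw [show ((cont w).1 : ℝ) * (cont w).2.2.2 - ((cont w).2.1 : ℝ) * (cont w).2.2.1 = (-1:ℝ)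
          from by exact_mod_cast congrArg (Int.cast : ℤ → ℝ) h]
        norm_num
    refine ⟨min m0 m1, max m0 m1, ?_, ?_, ?_⟩
    · -- length
      rw [max_sub_min_eq_abs, hm1, hm0]
      rw [div_sub_div _ _ (by linarith) (by linarith), abs_div]
      have hnum : |((((cont w).2.2.1 : ℝ) + (cont w).2.2.2) * (cont w).1
          - (((cont w).1 : ℝ) + (cont w).2.1) * ((cont w).2.2.1 : ℝ))| = 1 := by
        rw [show ((((cont w).2.2.1 : ℝ) + (cont w).2.2.2) * (cont w).1
            - (((cont w).1 : ℝ) + (cont w).2.1) * ((cont w).2.2.1 : ℝ))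
            = ((cont w).1 : ℝ) * (cont w).2.2.2 - ((cont w).2.1 : ℝ) * (cont w).2.2.1
          from by ring, hdet]
      rw [hnum, abs_of_pos (by nlinarith), hAw, hBw]
      rw [show (((q:ℝ) + p) * q) = ((p:ℝ) + q) * q from by ring]
    · -- Ioo ⊆ S
      intro y hy
      have hy' : y ∈ mob w '' Set.Ioo 0 1 := by rw [mob_image w hent_w]; exact hy
      obtain ⟨t, ht, rfl⟩ := hy'
      constructor
      · rw [hwht]
        exact mob_head_mem h0 wt hh2
          (fun x hx => hent_w x (by rw [hwht]; simp [hx])) t ⟨ht.1.le, ht.2.le⟩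
      · -- the index
        obtain ⟨c, utl, hu_eq⟩ : ∃ c utl, u = c :: utl := by
          match u, hune with
          | a :: l, _ => exact ⟨a, l, rfl⟩
        set l : List ℕ := utl.reverse with hl
        have hw_eq : w = l ++ [c] := by rw [hw, hu_eq, List.reverse_cons]
        have hlenw : w.length = l.length + 1 := by rw [hw_eq]; simp
        refine ⟨l.length, ?_, ?_⟩
        · rw [(convDen_eq_cont l.length (mob w t)).1,
            wordCF_of_mob w hent_w t ht l.length (by omega), hw_eq, List.take_left]
          have : (cont (l ++ [c])).2.1 = (cont l).1 := by rw [cont_concat]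
          rw [← this, ← hw_eq, hBw]
        · rw [(convDen_eq_cont (l.length + 1) (mob w t)).1,
            wordCF_of_mob w hent_w t ht (l.length + 1) (by omega), ← hlenw,
            List.take_length, hAw]
    · -- S ⊆ Icc
      rintro ξ ⟨hmem, i', hdi, hdi1⟩
      have hmem1 : ξ ∈ Set.Ico (0:ℝ) 1 := ⟨hmem.1.le, lt_of_le_of_lt hmem.2 (by norm_num)⟩
      by_cases hzero : ∃ k, k ≤ i' ∧ gaussMap^[k] ξ = 0
      · -- rational case, early termination
        obtain ⟨k0, hk0le, hk0⟩ := hzero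
        have hex : ∃ k, gaussMap^[k] ξ = 0 := ⟨k0, hk0⟩
        obtain ⟨m, hm0', hlt'⟩ : ∃ m, gaussMap^[m] ξ = 0 ∧ ∀ j < m, gaussMap^[j] ξ ≠ 0 :=
          ⟨Nat.find hex, Nat.find_spec hex, fun j hj => Nat.find_min hex hj⟩
        have hmle : m ≤ i' := by
          by_contra hcon
          exact hlt' k0 (by omega) hk0
        have hmpos : 0 < m := by
          rcases Nat.eq_zero_or_pos m with h | h
          · exfalso; rw [h] at hm0'; exact hmem.1.ne' hm0'
          · exact h
        obtain ⟨m₀, rfl⟩ : ∃ m₀, m = m₀ + 1 := ⟨m - 1, by omega⟩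
        have hlt : ∀ j < m₀ + 1, gaussMap^[j] ξ ≠ 0 := hlt' 
        have hIoo : ∀ j < m₀ + 1, gaussMap^[j] ξ ∈ Set.Ioo (0:ℝ) 1 := fun j hj => by
          have h1 := iterate_mem_Ico ξ hmem1 j
          exact ⟨lt_of_le_of_ne h1.1 (Ne.symm (hlt j hj)), h1.2⟩
        have hpq0 : ∀ k, m₀ + 1 ≤ k → partQuotN ξ k = 0 := fun k hk =>
          pq_zero_of_ge ξ (m₀+1) k hm0' hk
        have hstab := convDen_stab ξ m₀ hpq0
        have hq1 : ∀ j ≤ m₀, 1 ≤ partQuotN ξ j := fun j hj =>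
          pq_one_le ξ j (hIoo j (by omega))
        have hq2 : 2 ≤ partQuotN ξ 0 := pq_zero_ge_two ξ hmem
        have hmono := convDen_lt_succ ξ m₀ hq1 hq2
        obtain ⟨e, he⟩ : ∃ e, i' = m₀ + 1 + e := ⟨i' - (m₀+1), by omega⟩
        rcases Nat.even_or_odd e with ⟨d, hd⟩ | ⟨d, hd⟩
        · -- even: contradiction
          exfalso
          have e1 : convDen ξ i' = convDen ξ (m₀+1) := by
            rw [he, show m₀ + 1 + e = m₀ + 1 + 2*d from by omega]
            exact (hstab d).1
          have e2 : convDen ξ (i'+1) = convDen ξ m₀ := by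
            rw [he, show m₀ + 1 + e + 1 = m₀ + 2 + 2*d from by omega]
            exact (hstab d).2
          rw [e1] at hdi
          rw [e2] at hdi1
          omega
        · -- odd
          have e1 : convDen ξ i' = convDen ξ m₀ := by
            rw [he, show m₀ + 1 + e = m₀ + 2 + 2*d from by omega]
            exact (hstab d).2
          have e2 : convDen ξ (i'+1) = convDen ξ (m₀+1) := by
            rw [he, show m₀ + 1 + e + 1 = m₀ + 1 + 2*(d+1) from by omega]
            exact (hstab (d+1)).1
          rw [e1] at hdi
          rw [e2] at hdi1
          -- now convDen ξ m₀ = p, convDen ξ (m₀+1) = q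
          set u' : List ℕ := wordCF ξ (m₀+1) with hu'def
          have hcond : EuCond u'.reverse p q := by
            refine ⟨?_, ?_, ?_, ?_⟩
            · intro x hx
              rw [List.mem_reverse, hu'def, wordCF] at hx
              obtain ⟨k, hk⟩ := List.mem_ofFn.1 hx
              rw [← hk]
              exact hq1 k (by omega)
            · intro c hc
              rw [List.getLast?_reverse, hu'def, wordCF_succ] at hc
              simp at hc
              omega
            · rw [cont_reverse]
              rw [← (convDen_eq_cont (m₀+1) ξ).1]
              exact hdi1
            · rw [cont_reverse]
              have : u' = wordCF ξ m₀ ++ [partQuotN ξ m₀] := wordCF_concat ξ m₀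
              rw [this, cont_concat]
              rw [show ((cont (wordCF ξ m₀)).1) = convDen ξ m₀ from
                ((convDen_eq_cont m₀ ξ).1).symm]
              exact hdi
          have huu : u'.reverse = u := eu_unique q p u'.reverse u hp hpq hcond
            ⟨hent_u, hlast_u, hAu, hCu⟩
          have hu'w : u' = w := by rw [hw, ← huu, List.reverse_reverse]
          have hxi : ξ = mob w 0 := by
            have := eq_mob_wordCF (m₀+1) ξ (fun k hk => (hIoo k hk).1)
            rw [hu'def] at hu'w
            rw [hu'w] at this
            rw [this, hm0']
          rw [hxi]
          exact ⟨min_le_left _ _, le_max_left _ _⟩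
      · -- no termination before i'
        push_neg at hzero
        have hpos : ∀ k < i' + 1, 0 < gaussMap^[k] ξ := fun k hk => by
          have h1 := iterate_mem_Ico ξ hmem1 k
          exact lt_of_le_of_ne h1.1 (Ne.symm (hzero k (by omega)))
        have hIoo : ∀ j < i' + 1, gaussMap^[j] ξ ∈ Set.Ioo (0:ℝ) 1 := fun j hj =>
          ⟨hpos j hj, (iterate_mem_Ico ξ hmem1 j).2⟩
        set u' : List ℕ := wordCF ξ (i'+1) with hu'def
        have hcond : EuCond u'.reverse p q := by
          refine ⟨?_, ?_, ?_, ?_⟩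
          · intro x hx
            rw [List.mem_reverse, hu'def, wordCF] at hx
            obtain ⟨k, hk⟩ := List.mem_ofFn.1 hx
            rw [← hk]
            exact pq_one_le ξ k (hIoo k (by omega))
          · intro c hc
            rw [List.getLast?_reverse, hu'def, wordCF_succ] at hc
            simp at hc
            have := pq_zero_ge_two ξ hmem
            omega
          · rw [cont_reverse]
            rw [← (convDen_eq_cont (i'+1) ξ).1]
            exact hdi1
          · rw [cont_reverse]
            have : u' = wordCF ξ i' ++ [partQuotN ξ i'] := wordCF_concat ξ i'
            rw [this, cont_concat]
            rw [show ((cont (wordCF ξ i')).1) = convDen ξ i' from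
              ((convDen_eq_cont i' ξ).1).symm]
            exact hdi
        have huu : u'.reverse = u := eu_unique q p u'.reverse u hp hpq hcond
          ⟨hent_u, hlast_u, hAu, hCu⟩
        have hu'w : u' = w := by rw [hw, ← huu, List.reverse_reverse]
        have hxi : ξ = mob w (gaussMap^[i'+1] ξ) := by
          have := eq_mob_wordCF (i'+1) ξ hpos
          rw [hu'def] at hu'w
          rw [hu'w] at this
          exact this
        have ht01 := iterate_mem_Ico ξ hmem1 (i'+1)
        rcases eq_or_lt_of_le ht01.1 with hteq | htlt
        · rw [hxi, ← hteq]
          exact ⟨min_le_left _ _, le_max_left _ _⟩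
        · have : ξ ∈ mob w '' Set.Ioo 0 1 := ⟨_, ⟨htlt, ht01.2⟩, hxi.symm⟩
          rw [mob_image w hent_w] at this
          exact Set.Ioo_subset_Icc_self this
  · -- uniqueness of the index
    rintro ξ hmem hirr i j ⟨hip, _⟩ ⟨hjp, _⟩
    have hIoo : ξ ∈ Set.Ioo (0:ℝ) 1 := ⟨hmem.1, lt_of_le_of_lt hmem.2 (by norm_num)⟩
    have hall : ∀ k, 1 ≤ partQuotN ξ k := fun k =>
      pq_one_le ξ k (gauss_iter_irrational ξ hirr hIoo k).2
    have h0 : 2 ≤ partQuotN ξ 0 := pq_zero_ge_two ξ hmem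
    have hmono : StrictMono (convDen ξ) :=
      strictMono_nat_of_lt_succ (fun k => convDen_lt_succ ξ k (fun j _ => hall j) h0)
    exact hmono.injective (hip.trans hjp.symm)
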